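/- Gottschalk–Hedlund transfer (discrete to continuous direction): let 𝒯 = (T_t)_{t≥0} be a C₀-semigroup on a metrizable topological vector space X, let h > 0, and let x ∈ X. If x is strongly recurrent for the operator T_h, then x is strongly recurrent for the semigroup 𝒯. -/

import Mathlib

open scoped Classical
open Filter MeasureTheory
open scoped ENNReal

/-- **Gottschalk–Hedlund transfer (discrete to continuous direction).** If `𝒯 = (T_t)_{t≥0}`
is a `C₀`-semigroup on a metrizable topological vector space `X`, `h > 0` and `x ∈ X` is
strongly recurrent for the operator `T h`, then `x` is strongly recurrent for `𝒯`. -/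
theorem stmt6 {X : Type*} [TopologicalSpace X] [TopologicalSpace.MetrizableSpace X]
    [AddCommGroup X] [Module ℂ X] [IsTopologicalAddGroup X] [ContinuousSMul ℂ X]
    (T : ℝ → X →L[ℂ] X)
    (hT0 : T 0 = 1)
    (hTadd : ∀ t s : ℝ, 0 ≤ t → 0 ≤ s → T (t + s) = (T t).comp (T s))
    (hTcont : ∀ y : X, ContinuousOn (fun t : ℝ => T t y) (Set.Ici 0))
    (h : ℝ) (hh : 0 < h) (x : X)
    (hrec : ∀ U : Set X, IsOpen U → x ∈ U →
      0 < Filter.atTop.limsup (fun N : ℕ =>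
        (((Finset.range N).filter (fun n => ((T h) ^ n) x ∈ U)).card : ℝ) / N)) :
    ∀ U : Set X, IsOpen U → x ∈ U →
      0 < Filter.atTop.limsup (fun S : ℝ =>
        (volume {t : ℝ | t ∈ Set.Icc 0 S ∧ T t x ∈ U}).toReal / S) := by
  intro U hU hxU
  letI : MetricSpace X := TopologicalSpace.metrizableSpaceMetric X
  -- powers of `T h` are the semigroup at integer multiples of `h`
  have hTn : ∀ (n : ℕ), ∀ y : X, ((T h) ^ n) y = T ((n : ℝ) * h) y := by
    intro n
    induction n with
    | zero => intro y; simp [hT0]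
    | succ n ih =>
      intro y
      have harg : (((n + 1 : ℕ)) : ℝ) * h = (n : ℝ) * h + h := by push_cast; ring
      rw [pow_succ, ContinuousLinearMap.mul_apply, ih ((T h) y), harg,
        hTadd ((n : ℝ) * h) h (by positivity) hh.le]
      rfl
  -- a globally continuous extension of the orbit map
  have hFc : ∀ y : X, Continuous (fun t : ℝ => T (max t 0) y) := by
    intro y
    exact (hTcont y).comp_continuous (continuous_id.max continuous_const)
      (fun t => le_max_right t 0)
  -- choose δ
  have hx0 : T 0 x = x := by rw [hT0]; rfl
  have hUx : {t : ℝ | T t x ∈ U} ∈ nhdsWithin 0 (Set.Ici 0) := by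
    have hcw : ContinuousWithinAt (fun t : ℝ => T t x) (Set.Ici 0) 0 :=
      (hTcont x) 0 Set.self_mem_Ici
    have hmem : U ∈ nhds (T 0 x) := by rw [hx0]; exact hU.mem_nhds hxU
    exact hcw hmem
  rw [mem_nhdsGE_iff_exists_Icc_subset] at hUx
  obtain ⟨δ₀, hδ₀pos, hδ₀⟩ := hUx
  set δ : ℝ := min δ₀ (h / 2) with hδdef
  have hδpos : 0 < δ := lt_min hδ₀pos (by positivity)
  have hδh : δ < h := lt_of_le_of_lt (min_le_right _ _) (by linarith)
  have hδU : ∀ s ∈ Set.Icc 0 δ, T s x ∈ U := fun s hs =>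
    hδ₀ ⟨hs.1, le_trans hs.2 (min_le_left _ _)⟩
  -- the good-return sets
  set A : X → Set ℝ := fun y => {s : ℝ | s ∈ Set.Icc 0 δ ∧ T s y ∈ U} with hA
  have hAeq : ∀ y, A y = Set.Icc 0 δ ∩ (fun t : ℝ => T (max t 0) y) ⁻¹' U := by
    intro y; ext s
    simp only [hA, Set.mem_setOf_eq, Set.mem_inter_iff, Set.mem_preimage, Set.mem_Icc]
    constructor
    · rintro ⟨hs, hsU⟩; exact ⟨hs, by rwa [max_eq_left hs.1]⟩
    · rintro ⟨hs, hsU⟩; exact ⟨hs, by rwa [max_eq_left hs.1] at hsU⟩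
  have hAm : ∀ y, MeasurableSet (A y) := fun y => by
    rw [hAeq y]
    exact measurableSet_Icc.inter (hU.preimage (hFc y)).measurableSet
  -- key uniformity lemma, via continuity from below (Fatou-type argument)
  have key : ∃ V : Set X, IsOpen V ∧ x ∈ V ∧ ∀ n : ℕ, ((T h) ^ n) x ∈ V →
      ENNReal.ofReal (δ / 2) ≤ volume (A (((T h) ^ n) x)) := by
    by_contra hcon
    push_neg at hcon
    have hsel : ∀ k : ℕ, ∃ n : ℕ, ((T h) ^ n) x ∈ Metric.ball x (1 / (k + 1)) ∧
        volume (A (((T h) ^ n) x)) < ENNReal.ofReal (δ / 2) := fun k =>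
      hcon (Metric.ball x (1 / (k + 1))) Metric.isOpen_ball
        (Metric.mem_ball_self (by positivity))
    choose n hn hvol using hsel
    set y : ℕ → X := fun k => ((T h) ^ (n k)) x with hy
    have hylim : Filter.Tendsto y atTop (nhds x) := by
      rw [Metric.tendsto_atTop]
      intro ε hε
      obtain ⟨K, hK⟩ := exists_nat_gt (1 / ε)
      refine ⟨K, fun k hk => ?_⟩
      have h1 : dist (y k) x < 1 / ((k : ℝ) + 1) := by have := hn k; rw [Metric.mem_ball] at this; exact this
      have h2 : (1 : ℝ) / ε < (k : ℝ) + 1 := by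
        have : (K : ℝ) ≤ k := by exact_mod_cast hk
        linarith
      have h3 : (1 : ℝ) / ((k : ℝ) + 1) < ε := by
        rw [div_lt_iff₀ (by positivity)]
        rw [div_lt_iff₀ hε] at h2
        nlinarith
      linarith
    set B : ℕ → Set ℝ := fun m => ⋂ k ∈ Set.Ici m, A (y k) with hB
    have hBmono : Monotone B := by
      intro a b hab
      exact Set.iInter₂_mono' fun k hk => ⟨k, le_trans hab hk, subset_rfl⟩
    have hsub : Set.Icc 0 δ ⊆ ⋃ m, B m := by
      intro s hs
      have hTs : Filter.Tendsto (fun k => T s (y k)) atTop (nhds (T s x)) :=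
        ((T s).continuous.tendsto x).comp hylim
      have hev : ∀ᶠ k in atTop, T s (y k) ∈ U := hTs (hU.mem_nhds (hδU s hs))
      obtain ⟨m, hm⟩ := eventually_atTop.mp hev
      exact Set.mem_iUnion.2 ⟨m, Set.mem_iInter₂.2 fun k hk => ⟨hs, hm k hk⟩⟩
    have h1 : ENNReal.ofReal δ ≤ volume (⋃ m, B m) := by
      calc ENNReal.ofReal δ = volume (Set.Icc 0 δ) := by rw [Real.volume_Icc, sub_zero]
        _ ≤ _ := measure_mono hsub
    rw [hBmono.measure_iUnion] at h1
    have h2 : ∀ m, volume (B m) ≤ ENNReal.ofReal (δ / 2) := fun m =>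
      le_of_lt (lt_of_le_of_lt
        (measure_mono (Set.biInter_subset_of_mem (Set.mem_Ici.2 (le_refl m)))) (hvol m))
    have h3 : ENNReal.ofReal δ ≤ ENNReal.ofReal (δ / 2) := h1.trans (iSup_le h2)
    have h4 := (ENNReal.ofReal_le_ofReal_iff (by positivity)).mp h3
    linarith
  obtain ⟨V, hVopen, hxV, hVkey⟩ := key
  set dens : ℕ → ℝ := fun N =>
    (((Finset.range N).filter (fun n => ((T h) ^ n) x ∈ V)).card : ℝ) / N with hdens
  set L : ℝ := atTop.limsup dens with hL
  have hLpos : 0 < L := hrec V hVopen hxV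
  have hcb : atTop.IsCoboundedUnder (· ≤ ·) dens :=
    Filter.isCoboundedUnder_le_of_le atTop (x := 0) (fun N => by positivity)
  have hfreq : ∃ᶠ N in atTop, L / 2 < dens N :=
    Filter.frequently_lt_of_lt_limsup hcb (by linarith)
  set c : ℝ := L * δ / (4 * h) with hc
  have hcpos : 0 < c := div_pos (by nlinarith) (by linarith)
  -- main estimate at times N * h
  have main : ∀ N : ℕ, 1 ≤ N → L / 2 < dens N →
      c ≤ (volume {t : ℝ | t ∈ Set.Icc 0 ((N : ℝ) * h) ∧ T t x ∈ U}).toReal / ((N : ℝ) * h) := by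
    intro N hN1 hdN
    set G : Finset ℕ := (Finset.range N).filter (fun n => ((T h) ^ n) x ∈ V) with hG
    set E : ℕ → Set ℝ := fun n =>
      {t : ℝ | t ∈ Set.Icc ((n : ℝ) * h) ((n : ℝ) * h + δ) ∧ T t x ∈ U} with hE
    have hEm : ∀ n : ℕ, MeasurableSet (E n) := by
      intro n
      have : E n = Set.Icc ((n : ℝ) * h) ((n : ℝ) * h + δ) ∩
          (fun t : ℝ => T (max t 0) x) ⁻¹' U := by
        ext t
        simp only [hE, Set.mem_setOf_eq, Set.mem_inter_iff, Set.mem_preimage, Set.mem_Icc]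
        constructor
        · rintro ⟨ht, htU⟩
          refine ⟨ht, ?_⟩
          rwa [max_eq_left (le_trans (by positivity) ht.1)]
        · rintro ⟨ht, htU⟩
          refine ⟨ht, ?_⟩
          rwa [max_eq_left (le_trans (by positivity) ht.1)] at htU
      rw [this]
      exact measurableSet_Icc.inter (hU.preimage (hFc x)).measurableSet
    have hpre : ∀ n : ℕ, (fun s : ℝ => s + (n : ℝ) * h) ⁻¹' (E n) = A (((T h) ^ n) x) := by
      intro n
      ext s
      simp only [hE, hA, Set.mem_preimage, Set.mem_setOf_eq, Set.mem_Icc, hTn n x]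
      constructor
      · rintro ⟨⟨ha, hb⟩, hU'⟩
        have hs0 : 0 ≤ s := by linarith
        have e : T s ((T ((n : ℝ) * h)) x) = T (s + (n : ℝ) * h) x := by
          rw [hTadd s ((n : ℝ) * h) hs0 (by positivity)]; rfl
        exact ⟨⟨hs0, by linarith⟩, by rwa [e]⟩
      · rintro ⟨⟨hs0, hsd⟩, hU'⟩
        have e : T s ((T ((n : ℝ) * h)) x) = T (s + (n : ℝ) * h) x := by
          rw [hTadd s ((n : ℝ) * h) hs0 (by positivity)]; rfl
        exact ⟨⟨by linarith, by linarith⟩, by rwa [e] at hU'⟩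
    have hEvol : ∀ n ∈ G, ENNReal.ofReal (δ / 2) ≤ volume (E n) := by
      intro n hnG
      have hnV : ((T h) ^ n) x ∈ V := (Finset.mem_filter.1 hnG).2
      have := hVkey n hnV
      calc ENNReal.ofReal (δ / 2) ≤ volume (A (((T h) ^ n) x)) := this
        _ = volume ((fun s : ℝ => s + (n : ℝ) * h) ⁻¹' (E n)) := by rw [hpre n]
        _ = volume (E n) := by rw [measure_preimage_add_right]
    have hdisj : (↑G : Set ℕ).PairwiseDisjoint E := by
      have key2 : ∀ a b : ℕ, a < b → Disjoint (E a) (E b) := by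
        intro a b hlt
        refine Set.disjoint_left.2 fun t hta htb => ?_
        have h1 : t ≤ (a : ℝ) * h + δ := hta.1.2
        have h2 : (b : ℝ) * h ≤ t := htb.1.1
        have h3 : ((a : ℝ) + 1) ≤ (b : ℝ) := by exact_mod_cast hlt
        nlinarith
      intro a _ b _ hab
      rcases lt_or_gt_of_ne hab with hlt | hlt
      · exact key2 a b hlt
      · exact (key2 b a hlt).symm
    have hEsub : ∀ n ∈ G, E n ⊆ {t : ℝ | t ∈ Set.Icc 0 ((N : ℝ) * h) ∧ T t x ∈ U} := by
      intro n hnG t ht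
      have hnN : n < N := Finset.mem_range.1 (Finset.mem_filter.1 hnG).1
      have h3 : ((n : ℝ) + 1) ≤ (N : ℝ) := by exact_mod_cast hnN
      have h0 : (0 : ℝ) ≤ (n : ℝ) * h := by positivity
      exact ⟨⟨by linarith [ht.1.1], by nlinarith [ht.1.2]⟩, ht.2⟩
    have hunion : (G.card : ℝ≥0∞) * ENNReal.ofReal (δ / 2) ≤
        volume {t : ℝ | t ∈ Set.Icc 0 ((N : ℝ) * h) ∧ T t x ∈ U} := by
      have h1 : G.card • ENNReal.ofReal (δ / 2) ≤ ∑ n ∈ G, volume (E n) :=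
        Finset.card_nsmul_le_sum G _ _ hEvol
      rw [nsmul_eq_mul] at h1
      refine h1.trans ?_
      rw [← measure_biUnion_finset hdisj (fun n _ => hEm n)]
      exact measure_mono (Set.iUnion₂_subset hEsub)
    have hfin : volume {t : ℝ | t ∈ Set.Icc 0 ((N : ℝ) * h) ∧ T t x ∈ U} ≤
        ENNReal.ofReal ((N : ℝ) * h) := by
      have : volume (Set.Icc (0 : ℝ) ((N : ℝ) * h)) = ENNReal.ofReal ((N : ℝ) * h) := by
        rw [Real.volume_Icc, sub_zero]
      rw [← this]
      exact measure_mono fun t ht => ht.1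
    have hne : volume {t : ℝ | t ∈ Set.Icc 0 ((N : ℝ) * h) ∧ T t x ∈ U} ≠ ⊤ :=
      ne_top_of_le_ne_top ENNReal.ofReal_ne_top hfin
    have h5 : (G.card : ℝ) * (δ / 2) ≤
        (volume {t : ℝ | t ∈ Set.Icc 0 ((N : ℝ) * h) ∧ T t x ∈ U}).toReal := by
      have := ENNReal.toReal_mono hne hunion
      rwa [ENNReal.toReal_mul, ENNReal.toReal_natCast,
        ENNReal.toReal_ofReal (by positivity)] at this
    have hNpos : (0 : ℝ) < N := by exact_mod_cast Nat.lt_of_lt_of_le Nat.zero_lt_one hN1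
    have hNh : (0 : ℝ) < (N : ℝ) * h := by positivity
    rw [le_div_iff₀ hNh]
    have hcard : L / 2 * N < (G.card : ℝ) := by
      have := hdN
      rw [hdens] at this
      simp only at this
      rw [lt_div_iff₀ hNpos] at this
      exact this
    have : c * ((N : ℝ) * h) = (L / 2 * N) * (δ / 2) := by
      rw [hc]; field_simp; ring
    rw [this]
    have := mul_le_mul_of_nonneg_right hcard.le (by positivity : (0:ℝ) ≤ δ / 2)
    linarith
  -- transfer to real times
  have hfreqR : ∃ᶠ S in (atTop : Filter ℝ), c ≤
      (volume {t : ℝ | t ∈ Set.Icc 0 S ∧ T t x ∈ U}).toReal / S := by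
    rw [Filter.frequently_atTop]
    intro b
    obtain ⟨N, hNge, hNd⟩ := Filter.frequently_atTop.mp hfreq (max 1 ⌈b / h⌉₊)
    have hN1 : 1 ≤ N := le_trans (le_max_left _ _) hNge
    have hNb : b ≤ (N : ℝ) * h := by
      have h1 : b / h ≤ (⌈b / h⌉₊ : ℝ) := Nat.le_ceil _
      have h2 : ((⌈b / h⌉₊ : ℕ) : ℝ) ≤ (N : ℝ) := by
        exact_mod_cast le_trans (le_max_right 1 ⌈b / h⌉₊) hNge
      rw [div_le_iff₀ hh] at h1
      nlinarith
    exact ⟨(N : ℝ) * h, hNb, main N hN1 hNd⟩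
  have hbdd : (atTop : Filter ℝ).IsBoundedUnder (· ≤ ·)
      (fun S : ℝ => (volume {t : ℝ | t ∈ Set.Icc 0 S ∧ T t x ∈ U}).toReal / S) := by
    refine isBoundedUnder_of ⟨1, fun S => ?_⟩
    rcases le_or_gt S 0 with hS | hS
    · have hempty : volume {t : ℝ | t ∈ Set.Icc 0 S ∧ T t x ∈ U} = 0 := by
        have : volume (Set.Icc (0 : ℝ) S) = 0 := by
          rw [Real.volume_Icc]
          simp [ENNReal.ofReal_eq_zero.2 (by linarith)]
        exact measure_mono_null (fun t ht => ht.1) this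
      rw [hempty]
      simp
    · have hle : volume {t : ℝ | t ∈ Set.Icc 0 S ∧ T t x ∈ U} ≤ ENNReal.ofReal S := by
        have : volume (Set.Icc (0 : ℝ) S) = ENNReal.ofReal S := by
          rw [Real.volume_Icc, sub_zero]
        rw [← this]
        exact measure_mono fun t ht => ht.1
      have htr : (volume {t : ℝ | t ∈ Set.Icc 0 S ∧ T t x ∈ U}).toReal ≤ S :=
        ENNReal.toReal_le_of_le_ofReal hS.le hle
      rw [div_le_one hS]
      exact htr
  have hfin := le_limsup_of_frequently_le hfreqR hbdd
  linarith
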